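/- Suppose the point of C(S) closest to the origin is nonzero (equivalently 0 ∉ C(S)). Then there exists a real number λ > 0 with λ·(e₁ + e₂ + ⋯ + e_{M−1} − (M−1)e_M) ∈ C(S) if and only if M is the only vertex of G(S) with no outgoing edges, i.e. there is no j with (M,j) ∈ S and every i ∈ {1,…,M−1} has some j with (i,j) ∈ S. -/

import Mathlib

/-- If some vertex lies on an infinite `g`-walk all of whose steps are edges of `S`,
then `0` belongs to the convex hull of the edge vectors. -/
lemma stmt5_cycle_zero_mem {V : Type*} [NormedAddCommGroup V] [InnerProductSpace ℝ V]
    {n : ℕ} (e : Fin (n + 1) → V) (S : Finset (Fin (n + 1) × Fin (n + 1)))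
    (g : Fin (n + 1) → Fin (n + 1)) (x : Fin (n + 1))
    (hall : ∀ k : ℕ, (g^[k] x, g^[k + 1] x) ∈ S) :
    (0 : V) ∈ convexHull ℝ
      ((fun p : Fin (n + 1) × Fin (n + 1) => e p.1 - e p.2) '' ↑S) := by
  obtain ⟨a, b, hab, heq⟩ := Finite.exists_ne_map_eq_of_infinite (fun k : ℕ => g^[k] x)
  have key : ∀ a b : ℕ, a < b → g^[a] x = g^[b] x →
      (0 : V) ∈ convexHull ℝ
        ((fun p : Fin (n + 1) × Fin (n + 1) => e p.1 - e p.2) '' ↑S) := by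
    intro a b h heq
    set y := g^[a] x with hy
    set m := b - a with hm
    have hm0 : 0 < m := Nat.sub_pos_of_lt h
    have hiter : ∀ k : ℕ, g^[k] y = g^[k + a] x := by
      intro k
      rw [hy, ← Function.iterate_add_apply]
    have hmy : g^[m] y = y := by
      rw [hiter, hm, Nat.sub_add_cancel h.le, ← heq]
    have hedge : ∀ k : ℕ, (g^[k] y, g^[k + 1] y) ∈ S := by
      intro k
      rw [hiter, hiter]
      have := hall (k + a)
      simpa [Nat.add_right_comm k 1 a] using this
    have hsum : ∑ k ∈ Finset.range m, (e (g^[k] y) - e (g^[k + 1] y)) = 0 := by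
      rw [Finset.sum_range_sub' (fun k => e (g^[k] y)) m]
      simp [hmy]
    have hmem := Finset.centerMass_mem_convexHull (Finset.range m)
      (w := fun _ => (1 : ℝ)) (z := fun k => e (g^[k] y) - e (g^[k + 1] y))
      (s := (fun p : Fin (n + 1) × Fin (n + 1) => e p.1 - e p.2) '' ↑S)
      (fun i _ => zero_le_one)
      (by
        rw [Finset.sum_const, Finset.card_range, nsmul_eq_mul, mul_one]
        exact_mod_cast hm0)
      (fun k _ => ⟨(g^[k] y, g^[k + 1] y), hedge k, rfl⟩)
    have hc : (Finset.range m).centerMass (fun _ => (1 : ℝ))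
        (fun k => e (g^[k] y) - e (g^[k + 1] y)) = (0 : V) := by
      rw [Finset.centerMass]
      simp only [one_smul]
      rw [hsum, smul_zero]
    rwa [hc] at hmem
  rcases hab.lt_or_gt with h | h
  · exact key a b h heq
  · exact key b a h heq.symm

/-- Proposition 5: If the point of C(S) closest to the origin is nonzero,
then the ray ℝ₊(e₁ + ⋯ + e_{M−1} − (M−1)e_M) meets C(S) if and only if M (= `Fin.last n`)
is the only vertex of G(S) with no outgoing edges. -/
theorem stmt5 {V : Type*} [NormedAddCommGroup V] [InnerProductSpace ℝ V]
    (n : ℕ) (hn : 1 ≤ n) (e : Fin (n + 1) → V)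
    (he : ∀ i, e i ≠ 0)
    (horth : ∀ i j, i ≠ j → inner ℝ (e i) (e j) = (0 : ℝ))
    (S : Finset (Fin (n + 1) × Fin (n + 1))) (hS : S.Nonempty)
    (β : V)
    (hmem : β ∈ convexHull ℝ
      ((fun p : Fin (n + 1) × Fin (n + 1) => e p.1 - e p.2) '' ↑S))
    (hmin : ∀ v ∈ convexHull ℝ
      ((fun p : Fin (n + 1) × Fin (n + 1) => e p.1 - e p.2) '' ↑S), ‖β‖ ≤ ‖v‖)
    (hβ : β ≠ 0) :
    (∃ lam : ℝ, 0 < lam ∧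
      lam • ((∑ i : Fin n, e i.castSucc) - (n : ℝ) • e (Fin.last n)) ∈
        convexHull ℝ ((fun p : Fin (n + 1) × Fin (n + 1) => e p.1 - e p.2) '' ↑S)) ↔
    ((∀ j, (Fin.last n, j) ∉ S) ∧
      (∀ i : Fin (n + 1), i ≠ Fin.last n → ∃ j, (i, j) ∈ S)) := by
  classical
  have hzero : (0 : V) ∉ convexHull ℝ
      ((fun p : Fin (n + 1) × Fin (n + 1) => e p.1 - e p.2) '' ↑S) := by
    intro h0
    have h1 := hmin 0 h0
    rw [norm_zero] at h1
    exact hβ (norm_le_zero_iff.mp h1)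
  constructor
  · rintro ⟨lam, hlam, hmemX⟩
    rw [← Finset.coe_image, Finset.convexHull_eq] at hmemX
    obtain ⟨w, hw0, hw1, hwc⟩ := hmemX
    rw [Finset.centerMass_eq_of_sum_1 _ _ hw1] at hwc
    simp only [id] at hwc
    -- every vertex other than `last` has an outgoing edge
    have houts : ∀ i : Fin (n + 1), i ≠ Fin.last n → ∃ j, (i, j) ∈ S := by
      intro i hi
      obtain ⟨j', rfl⟩ := Fin.exists_castSucc_eq.2 hi
      have hXk : (inner ℝ ((∑ i : Fin n, e i.castSucc) - (n : ℝ) • e (Fin.last n))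
          (e j'.castSucc) : ℝ) = ‖e j'.castSucc‖ ^ 2 := by
        rw [inner_sub_left, sum_inner, real_inner_smul_left,
          horth (Fin.last n) j'.castSucc (Fin.castSucc_lt_last j').ne', mul_zero, sub_zero]
        rw [Finset.sum_eq_single j']
        · exact real_inner_self_eq_norm_sq _
        · intro b _ hb
          exact horth _ _ (fun hh => hb (Fin.castSucc_injective n hh))
        · simp
      have h2 : ∑ y ∈ S.image (fun p : Fin (n + 1) × Fin (n + 1) => e p.1 - e p.2),
          w y * (inner ℝ y (e j'.castSucc) : ℝ) = lam * ‖e j'.castSucc‖ ^ 2 := by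
        have h3 := congrArg (fun v : V => (inner ℝ v (e j'.castSucc) : ℝ)) hwc
        simpa [sum_inner, real_inner_smul_left, hXk] using h3
      have hsum_pos : 0 < ∑ y ∈ S.image (fun p : Fin (n + 1) × Fin (n + 1) => e p.1 - e p.2),
          w y * (inner ℝ y (e j'.castSucc) : ℝ) := by
        rw [h2]
        have hne0 := he j'.castSucc
        exact mul_pos hlam (pow_pos (norm_pos_iff.mpr hne0) 2)
      obtain ⟨y, hyT, hypos⟩ : ∃ y ∈ S.image (fun p : Fin (n + 1) × Fin (n + 1) =>
          e p.1 - e p.2), 0 < w y * (inner ℝ y (e j'.castSucc) : ℝ) := by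
        by_contra hcon
        push_neg at hcon
        exact absurd hsum_pos (not_lt.2 (Finset.sum_nonpos hcon))
      obtain ⟨p, hpS, rfl⟩ := Finset.mem_image.1 hyT
      have h3 : p.1 = j'.castSucc := by
        by_contra hne
        have h4 : (inner ℝ (e p.1 - e p.2) (e j'.castSucc) : ℝ) ≤ 0 := by
          rw [inner_sub_left, horth _ _ hne, zero_sub, neg_nonpos]
          rcases eq_or_ne p.2 j'.castSucc with h | h
          · rw [h, real_inner_self_eq_norm_sq]
            positivity
          · rw [horth _ _ h]
        have h5 := hw0 _ hyT
        nlinarith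
      exact ⟨p.2, by rw [← h3, Prod.mk.eta]; exact hpS⟩
    refine ⟨?_, houts⟩
    intro j hjS
    exfalso
    apply hzero
    have hgex : ∃ g : Fin (n + 1) → Fin (n + 1), ∀ i, (i, g i) ∈ S := by
      refine ⟨fun i => if h : i = Fin.last n then j else (houts i h).choose, fun i => ?_⟩
      by_cases h : i = Fin.last n
      · dsimp only
        rw [dif_pos h, h]
        exact hjS
      · dsimp only
        rw [dif_neg h]
        exact (houts i h).choose_spec
    obtain ⟨g, hg⟩ := hgex
    exact stmt5_cycle_zero_mem e S g (Fin.last n) (fun k => by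
      rw [Function.iterate_succ_apply']
      exact hg _)
  · rintro ⟨hlastS, hout⟩
    obtain ⟨g, hB⟩ : ∃ g : Fin (n + 1) → Fin (n + 1),
        ∀ i, i ≠ Fin.last n → (i, g i) ∈ S := by
      refine ⟨fun i => if h : i = Fin.last n then Fin.last n else (hout i h).choose,
        fun i h => ?_⟩
      dsimp only
      rw [dif_neg h]
      exact (hout i h).choose_spec
    have hhit : ∀ x : Fin (n + 1), ∃ k : ℕ, g^[k] x = Fin.last n := by
      intro x
      by_contra hcon
      push_neg at hcon
      exact hzero (stmt5_cycle_zero_mem e S g x (fun k => by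
        rw [Function.iterate_succ_apply']
        exact hB _ (hcon k)))
    set N : Fin n → ℕ := fun i => Nat.find (hhit i.castSucc) with hN
    have hNspec : ∀ i : Fin n, g^[N i] i.castSucc = Fin.last n :=
      fun i => Nat.find_spec (hhit i.castSucc)
    have hNmin : ∀ (i : Fin n) (k : ℕ), k < N i → g^[k] i.castSucc ≠ Fin.last n :=
      fun i k hk => Nat.find_min (hhit i.castSucc) hk
    have hNpos : ∀ i : Fin n, 0 < N i := by
      intro i
      refine Nat.pos_of_ne_zero (fun h0 => (Fin.castSucc_lt_last i).ne ?_)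
      simpa [h0] using hNspec i
    set t : Finset (Σ _ : Fin n, ℕ) :=
      Finset.univ.sigma (fun i : Fin n => Finset.range (N i)) with ht
    set z : (Σ _ : Fin n, ℕ) → V :=
      fun q => e (g^[q.2] q.1.castSucc) - e (g^[q.2 + 1] q.1.castSucc) with hz
    have htne : t.Nonempty := by
      refine ⟨⟨⟨0, hn⟩, 0⟩, ?_⟩
      rw [ht, Finset.mem_sigma]
      exact ⟨Finset.mem_univ _, Finset.mem_range.2 (hNpos _)⟩
    have hT : 0 < ∑ _q ∈ t, (1 : ℝ) := Finset.sum_pos (fun _ _ => one_pos) htne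
    have hzmem : ∀ q ∈ t, z q ∈
        ((fun p : Fin (n + 1) × Fin (n + 1) => e p.1 - e p.2) '' ↑S) := by
      rintro ⟨i, k⟩ hq
      rw [ht, Finset.mem_sigma] at hq
      have hk := Finset.mem_range.1 hq.2
      refine ⟨(g^[k] i.castSucc, g^[k + 1] i.castSucc), ?_, rfl⟩
      rw [Function.iterate_succ_apply']
      exact hB _ (hNmin i k hk)
    have hzsum : ∑ q ∈ t, z q =
        (∑ i : Fin n, e i.castSucc) - (n : ℝ) • e (Fin.last n) := by
      rw [ht, Finset.sum_sigma]
      have hpath : ∀ i : Fin n, ∑ k ∈ Finset.range (N i),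
          (e (g^[k] i.castSucc) - e (g^[k + 1] i.castSucc)) =
            e i.castSucc - e (Fin.last n) := by
        intro i
        rw [Finset.sum_range_sub' (fun k => e (g^[k] i.castSucc)) (N i)]
        simp [hNspec i]
      rw [Finset.sum_congr rfl (fun i _ => hpath i), Finset.sum_sub_distrib]
      congr 1
      rw [Finset.sum_const, Finset.card_univ, Fintype.card_fin]
      exact (Nat.cast_smul_eq_nsmul ℝ n _).symm
    have hmem2 := Finset.centerMass_mem_convexHull t (w := fun _ => (1 : ℝ)) (z := z)
      (s := (fun p : Fin (n + 1) × Fin (n + 1) => e p.1 - e p.2) '' ↑S)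
      (fun _ _ => zero_le_one) hT hzmem
    refine ⟨(∑ _q ∈ t, (1 : ℝ))⁻¹, inv_pos.2 hT, ?_⟩
    have hc : t.centerMass (fun _ => (1 : ℝ)) z =
        (∑ _q ∈ t, (1 : ℝ))⁻¹ •
          ((∑ i : Fin n, e i.castSucc) - (n : ℝ) • e (Fin.last n)) := by
      rw [Finset.centerMass]
      simp only [one_smul]
      rw [hzsum]
    rwa [hc] at hmem2
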